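/- For any a ∈ (0,1), b ∈ ℝ, any measurable function t ↦ t^{a+b−1} E_{a,a+b}(−λ t^a) with λ > 0 satisfies: if a + b = 1 then its derivative at t > 0 equals −λ t^{a−1} E_{a,a}(−λ t^a), and if a + b ≠ 1 then its derivative equals t^{a+b−2} E_{a,a+b−1}(−λ t^a). -/

import Mathlib

open Filter

/-- The Mittag--Leffler function `E_{a,b}(z) = ∑_{k=0}^∞ z^k / Γ(a k + b)`. -/
noncomputable def mittagLeffler (a b z : ℝ) : ℝ :=
  ∑' k : ℕ, z ^ k / Real.Gamma (a * k + b)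

/-- Master summability lemma. -/
lemma summable_pow_div_abs_gamma (a β r : ℝ) (ha : 0 < a) (hr : 0 ≤ r) :
    Summable (fun k : ℕ => r ^ k / |Real.Gamma (a * k + β)|) := by
  set s : ℝ := 2 * r + 2 with hs
  have hs2 : (2:ℝ) ≤ s := by simp [hs]; linarith
  have hs0 : (0:ℝ) < s := by linarith
  set q : ℝ := s ^ (a⁻¹ : ℝ) with hqdef
  have hq1 : 1 ≤ q := Real.one_le_rpow (by linarith) (by positivity)
  have hq0 : 0 < q := lt_of_lt_of_le one_pos hq1
  have hqa : q ^ (a:ℝ) = s := by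
    rw [hqdef, ← Real.rpow_mul hs0.le, inv_mul_cancel₀ (ne_of_gt ha), Real.rpow_one]
  -- q^n ≤ n! eventually
  obtain ⟨M, hM⟩ : ∃ M : ℕ, ∀ n ≥ M, q ^ n ≤ (Nat.factorial n : ℝ) := by
    have h := (FloorSemiring.tendsto_pow_div_factorial_atTop (K := ℝ) q).eventually
      (gt_mem_nhds one_pos)
    obtain ⟨M, hM⟩ := eventually_atTop.mp h
    exact ⟨M, fun n hn => le_of_lt ((div_lt_one (by positivity)).mp (hM n hn))⟩
  have hev : ∀ᶠ k : ℕ in atTop, ((M:ℝ) + 3) ≤ a * k + β := by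
    have h1 : Tendsto (fun k : ℕ => a * k + β) atTop atTop := by
      apply Tendsto.atTop_add _ tendsto_const_nhds
      exact (tendsto_natCast_atTop_atTop).const_mul_atTop ha
    exact h1.eventually_ge_atTop _
  apply summable_of_isBigO_nat (summable_geometric_of_lt_one (by norm_num) (by norm_num)
    : Summable fun k : ℕ => (1/2 : ℝ) ^ k)
  rw [Asymptotics.isBigO_iff]
  refine ⟨q ^ (2 - β : ℝ), ?_⟩
  filter_upwards [hev] with k hk
  set x : ℝ := a * k + β with hx
  have hx2 : (2:ℝ) ≤ x := by
    have : (0:ℝ) ≤ (M:ℝ) := Nat.cast_nonneg M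
    linarith
  set m : ℕ := ⌊x⌋₊ with hm
  have hmM : M + 3 ≤ m := Nat.le_floor (by push_cast; linarith)
  have hmx : (m : ℝ) ≤ x := Nat.floor_le (by linarith)
  have hxm : x < m + 1 := Nat.lt_floor_add_one x
  have hm1 : 1 ≤ m := by omega
  have hm2 : (2:ℝ) ≤ (m:ℝ) := by
    have : ((M:ℝ) + 3) ≤ (m:ℝ) := by exact_mod_cast hmM
    have h0 : (0:ℝ) ≤ (M:ℝ) := Nat.cast_nonneg M
    linarith
  have hΓm : Real.Gamma m = (Nat.factorial (m-1) : ℝ) := by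
    have h1 : ((m - 1 : ℕ) : ℝ) + 1 = (m : ℝ) := by
      have : (m - 1) + 1 = m := Nat.succ_pred_eq_of_pos hm1
      exact_mod_cast congrArg (Nat.cast (R := ℝ)) this
    rw [← h1, Real.Gamma_nat_eq_factorial]
  have hΓx : Real.Gamma m ≤ Real.Gamma x :=
    Real.Gamma_strictMonoOn_Ici.monotoneOn hm2 hx2 hmx
  have hfac : q ^ (m-1 : ℕ) ≤ (Nat.factorial (m-1) : ℝ) := hM (m-1) (by omega)
  have hexp : q ^ (x - 2 : ℝ) ≤ q ^ ((m-1 : ℕ) : ℝ) := by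
    apply Real.rpow_le_rpow_of_exponent_le hq1
    have : ((m - 1 : ℕ) : ℝ) = (m:ℝ) - 1 := by
      push_cast [Nat.cast_sub hm1]; ring
    rw [this]; linarith
  have hchain : q ^ (x - 2 : ℝ) ≤ Real.Gamma x := by
    calc q ^ (x - 2 : ℝ) ≤ q ^ ((m-1:ℕ) : ℝ) := hexp
      _ = q ^ (m-1 : ℕ) := Real.rpow_natCast q (m-1)
      _ ≤ (Nat.factorial (m-1) : ℝ) := hfac
      _ = Real.Gamma m := hΓm.symm
      _ ≤ Real.Gamma x := hΓx
  have hΓpos : 0 < Real.Gamma x := Real.Gamma_pos_of_pos (by linarith)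
  have hqx2 : 0 < q ^ (x - 2 : ℝ) := Real.rpow_pos_of_pos hq0 _
  -- now the bound
  have key : r ^ k / Real.Gamma x ≤ q ^ (2 - β : ℝ) * (1/2 : ℝ) ^ k := by
    have h1 : r ^ k / Real.Gamma x ≤ r ^ k / q ^ (x - 2 : ℝ) :=
      div_le_div_of_nonneg_left (by positivity) hqx2 hchain
    have h2 : q ^ (x - 2 : ℝ) = s ^ k * q ^ (β - 2 : ℝ) := by
      rw [hx]
      have : a * (k:ℝ) + β - 2 = a * (k:ℝ) + (β - 2) := by ring
      rw [this, Real.rpow_add hq0, Real.rpow_mul hq0.le, hqa, Real.rpow_natCast]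
    have hc : q ^ (2 - β : ℝ) = (q ^ (β - 2 : ℝ))⁻¹ := by
      rw [← Real.rpow_neg hq0.le]; ring_nf
    have h3 : r ^ k / q ^ (x - 2 : ℝ) = (r/s) ^ k * q ^ (2 - β : ℝ) := by
      rw [h2, hc, div_pow, div_mul_eq_div_div, div_eq_mul_inv]
    have h4 : (r/s) ^ k ≤ (1/2 : ℝ) ^ k := by
      apply pow_le_pow_left₀ (by positivity)
      rw [div_le_div_iff₀ hs0 two_pos]; linarith
    calc r ^ k / Real.Gamma x ≤ r ^ k / q ^ (x - 2 : ℝ) := h1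
      _ = (r/s) ^ k * q ^ (2 - β : ℝ) := h3
      _ ≤ (1/2:ℝ) ^ k * q ^ (2 - β : ℝ) := by
          apply mul_le_mul_of_nonneg_right h4 (by positivity)
      _ = q ^ (2 - β : ℝ) * (1/2:ℝ) ^ k := by ring
  rw [Real.norm_eq_abs, Real.norm_eq_abs, abs_of_pos hΓpos,
    abs_of_nonneg (by positivity : (0:ℝ) ≤ r ^ k / Real.Gamma x),
    abs_of_nonneg (by positivity : (0:ℝ) ≤ (1/2:ℝ)^k)]
  exact key

lemma gamma_inv_succ (z : ℝ) : z * (Real.Gamma (z+1))⁻¹ = (Real.Gamma z)⁻¹ := by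
  by_cases hz : z = 0
  · simp [hz, Real.Gamma_zero]
  · rw [Real.Gamma_add_one hz, mul_inv, ← mul_assoc, mul_inv_cancel₀ hz, one_mul]

lemma summable_term (a β e lam t : ℝ) (ha : 0 < a) (hlam : 0 ≤ lam) (ht : 0 < t) :
    Summable (fun k : ℕ => (-lam)^k * t ^ (a*k + e) / Real.Gamma (a*k + β)) := by
  apply Summable.of_norm
  apply Summable.congr ((summable_pow_div_abs_gamma a β (lam * t^(a:ℝ)) ha
    (by positivity)).mul_left (t ^ (e:ℝ)))
  intro k
  rw [norm_div, norm_mul, norm_pow, norm_neg, Real.norm_eq_abs, Real.norm_eq_abs,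
    Real.norm_eq_abs, abs_of_nonneg hlam, abs_of_nonneg (Real.rpow_nonneg ht.le _)]
  have h1 : t ^ (a*k + e : ℝ) = (t^(a:ℝ))^k * t^(e:ℝ) := by
    rw [Real.rpow_add ht, Real.rpow_mul ht.le, Real.rpow_natCast]
  rw [h1, mul_pow]; ring

lemma main_deriv (a b lam t : ℝ) (ha : 0 < a) (hlam : 0 < lam) (ht : 0 < t) :
    HasDerivAt (fun u : ℝ => u ^ (a+b-1) * mittagLeffler a (a+b) (-lam * u ^ a))
      (∑' k : ℕ, (-lam)^k * t ^ (a*k + (a+b-2)) / Real.Gamma (a*k + (a+b-1))) t := by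
  set c : ℕ → ℝ := fun k => (-lam)^k / Real.Gamma (a*k + (a+b)) with hc
  set g : ℕ → ℝ → ℝ := fun k u => c k * u ^ (a*k + (a+b-1)) with hg
  set g' : ℕ → ℝ → ℝ := fun k u => c k * ((a*k + (a+b-1)) * u ^ (a*k + (a+b-2))) with hg'
  set r1 : ℝ := 2*lam*(t/2)^(a:ℝ) with hr1
  set r2 : ℝ := 2*lam*(2*t)^(a:ℝ) with hr2
  set B : ℕ → ℝ := fun k => (a+|a+b-1|) *
    ((t/2)^(a+b-2:ℝ) * (r1^k / |Real.Gamma (a*k+(a+b))|) +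
     (2*t)^(a+b-2:ℝ) * (r2^k / |Real.Gamma (a*k+(a+b))|)) with hB
  have hBsum : Summable B := by
    apply Summable.mul_left
    exact ((summable_pow_div_abs_gamma a (a+b) r1 ha (by positivity)).mul_left _).add
      ((summable_pow_div_abs_gamma a (a+b) r2 ha (by positivity)).mul_left _)
  have hS : IsOpen (Set.Ioo (t/2) (2*t)) := isOpen_Ioo
  have htS : t ∈ Set.Ioo (t/2) (2*t) := ⟨by linarith, by linarith⟩
  have hderiv : ∀ (k : ℕ) (y : ℝ), y ∈ Set.Ioo (t/2) (2*t) → HasDerivAt (g k) (g' k y) y := by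
    intro k y hy
    have hy0 : 0 < y := lt_trans (by linarith) hy.1
    have h := (Real.hasDerivAt_rpow_const (p := a*k + (a+b-1))
      (Or.inl (ne_of_gt hy0))).const_mul (c k)
    have he : a*(k:ℝ) + (a+b-1) - 1 = a*k + (a+b-2) := by ring
    rw [he] at h
    exact h
  have hbound : ∀ (k : ℕ) (y : ℝ), y ∈ Set.Ioo (t/2) (2*t) → ‖g' k y‖ ≤ B k := by
    intro k y hy
    have hy0 : 0 < y := lt_trans (by linarith) hy.1
    have hyp : (0:ℝ) < y ^ (a*k + (a+b-2) : ℝ) := Real.rpow_pos_of_pos hy0 _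
    have hnorm : ‖g' k y‖ = lam^k / |Real.Gamma (a*k+(a+b))| *
        (|a*(k:ℝ) + (a+b-1)| * y ^ (a*k + (a+b-2) : ℝ)) := by
      simp only [hg', hc]
      rw [Real.norm_eq_abs, abs_mul, abs_mul, abs_div, abs_pow, abs_neg,
        abs_of_pos hlam, abs_of_pos hyp]
    have hyb : y ^ (a*k + (a+b-2) : ℝ) ≤ (t/2)^(a*k + (a+b-2) : ℝ) + (2*t)^(a*k + (a+b-2):ℝ) := by
      rcases le_or_gt 0 (a*(k:ℝ) + (a+b-2)) with hp | hp
      · have h1 := Real.rpow_le_rpow hy0.le hy.2.le hp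
        have h2 : (0:ℝ) ≤ (t/2)^(a*k + (a+b-2):ℝ) := Real.rpow_nonneg (by positivity) _
        linarith
      · have h1 := Real.rpow_le_rpow_of_nonpos (by positivity : (0:ℝ) < t/2) hy.1.le hp.le
        have h2 : (0:ℝ) ≤ (2*t)^(a*k + (a+b-2):ℝ) := Real.rpow_nonneg (by positivity) _
        linarith
    have hek : |a*(k:ℝ) + (a+b-1)| ≤ (a+|a+b-1|) * 2^k := by
      have h1 : |a*(k:ℝ) + (a+b-1)| ≤ a*k + |a+b-1| := by
        calc |a*(k:ℝ) + (a+b-1)| ≤ |a*(k:ℝ)| + |a+b-1| := abs_add_le _ _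
          _ = a*(k:ℝ) + |a+b-1| := by rw [abs_of_nonneg (by positivity)]
      have h2 : (k:ℝ) + 1 ≤ 2^k := by
        exact_mod_cast Nat.succ_le_of_lt (Nat.lt_two_pow_self (n := k))
      have h3 : (1:ℝ) ≤ 2^k := one_le_pow₀ (by norm_num)
      have h4 : (0:ℝ) ≤ |a+b-1| := abs_nonneg _
      nlinarith [ha.le, Nat.cast_nonneg (α := ℝ) k]
    calc ‖g' k y‖ = lam^k / |Real.Gamma (a*k+(a+b))| *
        (|a*(k:ℝ) + (a+b-1)| * y ^ (a*k + (a+b-2) : ℝ)) := hnorm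
      _ ≤ lam^k / |Real.Gamma (a*k+(a+b))| *
          (((a+|a+b-1|) * 2^k) * ((t/2)^(a*k + (a+b-2):ℝ) + (2*t)^(a*k + (a+b-2):ℝ))) := by
          apply mul_le_mul_of_nonneg_left _ (by positivity)
          exact mul_le_mul hek hyb hyp.le (by positivity)
      _ = B k := by
          have e1 : (t/2:ℝ)^(a*k + (a+b-2):ℝ) = ((t/2:ℝ)^(a:ℝ))^k * (t/2:ℝ)^(a+b-2:ℝ) := by
            rw [Real.rpow_add (by positivity), Real.rpow_mul (by positivity), Real.rpow_natCast]
          have e2 : (2*t:ℝ)^(a*k + (a+b-2):ℝ) = ((2*t:ℝ)^(a:ℝ))^k * (2*t:ℝ)^(a+b-2:ℝ) := by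
            rw [Real.rpow_add (by positivity), Real.rpow_mul (by positivity), Real.rpow_natCast]
          simp only [hB, hr1, hr2, e1, e2, mul_pow]
          ring
  have hsum0 : Summable (fun k => g k t) := by
    apply Summable.congr (summable_term a (a+b) (a+b-1) lam t ha hlam.le ht)
    intro k
    simp only [hg, hc]
    ring
  have H := hasDerivAt_tsum_of_isPreconnected hBsum hS (convex_Ioo _ _).isPreconnected
    hderiv hbound htS hsum0 htS
  have hval : ∑' k, g' k t =
      ∑' k : ℕ, (-lam)^k * t ^ (a*k + (a+b-2)) / Real.Gamma (a*k + (a+b-1)) := by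
    apply tsum_congr; intro k
    have hz := gamma_inv_succ (a*k + (a+b-1))
    have h1 : a*(k:ℝ) + (a+b-1) + 1 = a*k + (a+b) := by ring
    rw [h1] at hz
    simp only [hg', hc, div_eq_mul_inv]
    calc (-lam)^k * (Real.Gamma (a*k+(a+b)))⁻¹ * ((a*k + (a+b-1)) * t ^ (a*k + (a+b-2) : ℝ))
        = (-lam)^k * t ^ (a*k + (a+b-2):ℝ) * ((a*k + (a+b-1)) * (Real.Gamma (a*k+(a+b)))⁻¹) := by
          ring
      _ = (-lam)^k * t ^ (a*k + (a+b-2):ℝ) * (Real.Gamma (a*k + (a+b-1)))⁻¹ := by rw [hz]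
  rw [hval] at H
  apply H.congr_of_eventuallyEq
  filter_upwards [hS.mem_nhds htS] with y hy
  have hy0 : 0 < y := lt_trans (by linarith) hy.1
  rw [mittagLeffler, ← tsum_mul_left]
  apply tsum_congr; intro k
  have h1 : y ^ (a*k + (a+b-1) : ℝ) = (y^(a:ℝ))^k * y^(a+b-1:ℝ) := by
    rw [Real.rpow_add hy0, Real.rpow_mul hy0.le, Real.rpow_natCast]
  simp only [hg, hc, h1]
  rw [mul_pow]
  ring

theorem stmt_1 (a b lam t : ℝ) (ha : 0 < a) (ha1 : a < 1) (hlam : 0 < lam)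
    (ht : 0 < t) :
    (a + b = 1 →
      HasDerivAt (fun u : ℝ => u ^ (a + b - 1) * mittagLeffler a (a + b) (-lam * u ^ a))
        (-lam * t ^ (a - 1) * mittagLeffler a a (-lam * t ^ a)) t) ∧
    (a + b ≠ 1 →
      HasDerivAt (fun u : ℝ => u ^ (a + b - 1) * mittagLeffler a (a + b) (-lam * u ^ a))
        (t ^ (a + b - 2) * mittagLeffler a (a + b - 1) (-lam * t ^ a)) t) := by
  have Hd := main_deriv a b lam t ha hlam ht
  have hsum : Summable (fun k : ℕ => (-lam)^k * t^(a*k+(a+b-2))/Real.Gamma (a*k+(a+b-1))) :=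
    summable_term a (a+b-1) (a+b-2) lam t ha hlam.le ht
  constructor
  · intro h1
    convert Hd using 1
    rw [hsum.tsum_eq_zero_add]
    have h0 : (-lam)^(0:ℕ) * t^(a*(0:ℕ)+(a+b-2))/Real.Gamma (a*(0:ℕ)+(a+b-1)) = 0 := by
      have : a*((0:ℕ):ℝ)+(a+b-1) = 0 := by push_cast; linarith
      rw [this, Real.Gamma_zero, div_zero]
    rw [h0, zero_add, mittagLeffler, ← tsum_mul_left]
    apply tsum_congr; intro k
    have hta : (0:ℝ) < t ^ (a:ℝ) := Real.rpow_pos_of_pos ht _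
    have e1 : t ^ (a*((k+1:ℕ):ℝ)+(a+b-2)) = (t^(a:ℝ))^k * t^(a-1:ℝ) := by
      have : a*((k+1:ℕ):ℝ)+(a+b-2) = a*k + (a-1) + (a+b-1) := by push_cast; ring
      rw [this, h1]
      have : a*(k:ℝ) + (a-1) + (1-1) = a*k + (a-1) := by ring
      rw [this, Real.rpow_add ht, Real.rpow_mul ht.le, Real.rpow_natCast]
    have e2 : a*((k+1:ℕ):ℝ)+(a+b-1) = a*k + a := by push_cast; rw [show a+b = 1 from h1]; ring
    rw [e1, e2]
    rw [neg_mul, neg_pow, mul_pow, pow_succ]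
    ring_nf
  · intro _
    convert Hd using 1
    rw [mittagLeffler, ← tsum_mul_left]
    apply tsum_congr; intro k
    have e1 : t ^ (a*(k:ℝ)+(a+b-2)) = (t^(a:ℝ))^k * t^(a+b-2:ℝ) := by
      rw [Real.rpow_add ht, Real.rpow_mul ht.le, Real.rpow_natCast]
    rw [e1, neg_mul, neg_pow, mul_pow]
    ring
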